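/- Combined translation correctness: for every I/O-guarded event system G and state s, traces(G, s) = tracesH(emb(proc(G, s))), i.e., the event system, its process translation, and the derived separation-logic I/O specification all have exactly the same trace sets. -/

import Mathlib

/-! ## Event systems -/

/-- Event systems: labeled transition systems. -/
structure ES (S E : Type) where
  trans : S → E → S → Prop

namespace ES

/-- Extension of the transition relation to finite sequences of events. -/
inductive mtrans {S E : Type} (M : ES S E) : S → List E → S → Prop
  | nil (s : S) : mtrans M s [] s
  | snoc {s s' s'' : S} {τ : List E} {e : E} :
      mtrans M s τ s' → M.trans s' e s'' → mtrans M s (τ ++ [e]) s''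

/-- The traces of an event system starting from a set of initial states. -/
def traces {S E : Type} (M : ES S E) (I : Set S) : Set (List E) :=
  {τ | ∃ s ∈ I, ∃ s', M.mtrans s τ s'}

/-- Traces starting from a single state. -/
def tracesFrom {S E : Type} (M : ES S E) (s : S) : Set (List E) :=
  M.traces {s}

end ES

/-! ## Chunks and heaps -/

/-- Chunks: I/O permissions `bio(t, v, w, t')` and tokens `token(t)`. -/
inductive Chunk (B V Pl : Type) : Type
  | bio (b : B) (t : Pl) (v w : V) (t' : Pl)
  | token (t : Pl)

/-- Heaps are (possibly infinite) multisets of chunks, i.e. functions to `ℕ∞`. -/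
abbrev Heap (B V Pl : Type) := Chunk B V Pl → ℕ∞

open Classical in
/-- The singleton heap containing one chunk. -/
noncomputable def Heap.single {B V Pl : Type} (c : Chunk B V Pl) : Heap B V Pl :=
  fun c' => if c' = c then 1 else 0

/-- Well-typedness of a chunk w.r.t. a typing function `Ty`. -/
def Chunk.wellTyped {B V Pl : Type} (Ty : B → V → Set V) : Chunk B V Pl → Prop
  | .bio b _ v w _ => w ∈ Ty b v
  | .token _ => True

/-! ## Assertions (coinductive, as an M-type) -/

/-- Heads of the assertion functor. -/
inductive AssnHead (B V Pl : Type) : Type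
  | bool (b : Bool)
  | chunk (c : Chunk B V Pl)
  | star
  | exv
  | expl

/-- Arities (branching types) of the assertion functor. -/
def AssnAr (B V Pl : Type) : AssnHead B V Pl → Type
  | .bool _ => Empty
  | .chunk _ => Empty
  | .star => Bool
  | .exv => V
  | .expl => Pl

/-- The assertion polynomial functor. -/
def AssnF (B V Pl : Type) : PFunctor := ⟨AssnHead B V Pl, AssnAr B V Pl⟩

/-- Coinductive separation logic assertions:
`φ ::=ν b | c | φ₁ ⋆ φ₂ | ∃v. φ | ∃t. φ`. -/
def Assn (B V Pl : Type) : Type := (AssnF B V Pl).M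

namespace Assn

variable {B V Pl : Type}

/-- Boolean assertion. -/
def mkBool (b : Bool) : Assn B V Pl := PFunctor.M.mk ⟨.bool b, fun e => e.elim⟩

/-- Chunk assertion. -/
def mkChunk (c : Chunk B V Pl) : Assn B V Pl := PFunctor.M.mk ⟨.chunk c, fun e => e.elim⟩

/-- Separating conjunction. -/
def star (φ ψ : Assn B V Pl) : Assn B V Pl :=
  PFunctor.M.mk ⟨.star, fun x : Bool => if x then φ else ψ⟩

/-- Existential quantification over values. -/
def exv (f : V → Assn B V Pl) : Assn B V Pl := PFunctor.M.mk ⟨.exv, f⟩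

/-- Existential quantification over places. -/
def expl (f : Pl → Assn B V Pl) : Assn B V Pl := PFunctor.M.mk ⟨.expl, f⟩

end Assn

/-- One step of the satisfaction relation. -/
def SatF {B V Pl : Type} (Ty : B → V → Set V)
    (R : Heap B V Pl → Assn B V Pl → Prop) (h : Heap B V Pl) (φ : Assn B V Pl) : Prop :=
  match PFunctor.M.dest φ with
  | ⟨.bool b, _⟩ => b = true
  | ⟨.chunk c, _⟩ => 0 < h c ∧ c.wellTyped Ty
  | ⟨.star, f⟩ => ∃ h1 h2, h = h1 + h2 ∧ R h1 (f true) ∧ R h2 (f false)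
  | ⟨.exv, f⟩ => ∃ v, R h (f v)
  | ⟨.expl, f⟩ => ∃ t, R h (f t)

/-- Coinductive satisfaction relation `h ⊨ φ`, as the greatest fixed point
of `SatF` (defined as the union of all post-fixed points). -/
def sat {B V Pl : Type} (Ty : B → V → Set V) (h : Heap B V Pl) (φ : Assn B V Pl) : Prop :=
  ∃ R, (∀ h' φ', R h' φ' → SatF Ty R h' φ') ∧ R h φ

/-! ## Heap transition system -/

/-- The heap transition system over `Option Heap` (`none` is the chaotic state ⊥),
with rules Bio, Contradict, and Chaos. -/
inductive HTrans {B V Pl : Type} (Ty : B → V → Set V) :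
    Option (Heap B V Pl) → B × V × V → Option (Heap B V Pl) → Prop
  | bio {b : B} {v w : V} {t t' : Pl} {h : Heap B V Pl} :
      w ∈ Ty b v →
      HTrans Ty (some (Heap.single (.token t) + Heap.single (.bio b t v w t') + h)) (b, v, w)
        (some (Heap.single (.token t') + h))
  | contradict {b : B} {v w w' : V} {t t' : Pl} {h : Heap B V Pl} :
      w ≠ w' → w ∈ Ty b v → w' ∈ Ty b v →
      HTrans Ty (some (Heap.single (.token t) + Heap.single (.bio b t v w t') + h)) (b, v, w')
        none
  | chaos {b : B} {v w : V} : w ∈ Ty b v → HTrans Ty none (b, v, w) none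

/-- The heap transition system as an event system. -/
def hES {B V Pl : Type} (Ty : B → V → Set V) : ES (Option (Heap B V Pl)) (B × V × V) :=
  ⟨HTrans Ty⟩

/-- Traces executable in all heaps of a set of heaps. -/
def tracesH {B V Pl : Type} (Ty : B → V → Set V) (H : Set (Heap B V Pl)) :
    Set (List (B × V × V)) :=
  {τ | ∀ h ∈ H, τ ∈ (hES Ty).tracesFrom (some h)}

/-- Traces of an assertion: traces executable in all its heap models. -/
def tracesHA {B V Pl : Type} (Ty : B → V → Set V) (φ : Assn B V Pl) :
    Set (List (B × V × V)) :=
  tracesH Ty {h | sat Ty h φ}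

/-! ## Processes (coinductive, as an M-type) -/

/-- Heads of the process functor. -/
inductive ProcHead (B V : Type) : Type
  | null
  | pre (b : B) (v : V)
  | choice

/-- Arities of the process functor. -/
def ProcAr (B V : Type) : ProcHead B V → Type
  | .null => Empty
  | .pre _ _ => V
  | .choice => Bool

/-- The process polynomial functor. -/
def ProcF (B V : Type) : PFunctor := ⟨ProcHead B V, ProcAr B V⟩

/-- Coinductive processes: `P ::=ν Null | bio(v, z).P | P₁ ⊕ P₂`. -/
def Proc (B V : Type) : Type := (ProcF B V).M

namespace Proc

variable {B V : Type}

/-- The inactive process. -/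
def null : Proc B V := PFunctor.M.mk ⟨.null, fun e => e.elim⟩

/-- Prefixing with an I/O operation, binding the input in the continuation. -/
def pre (b : B) (v : V) (k : V → Proc B V) : Proc B V := PFunctor.M.mk ⟨.pre b v, k⟩

/-- Binary choice. -/
def choice (P Q : Proc B V) : Proc B V :=
  PFunctor.M.mk ⟨.choice, fun x : Bool => if x then P else Q⟩

end Proc

/-- Operational semantics of processes (rules Pref and Choice). -/
inductive PTrans {B V : Type} (Ty : B → V → Set V) : Proc B V → B × V × V → Proc B V → Prop
  | pref {P : Proc B V} {b : B} {v w : V} {k : V → Proc B V} :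
      w ∈ Ty b v → PFunctor.M.dest P = ⟨.pre b v, k⟩ → PTrans Ty P (b, v, w) (k w)
  | chl {P P' : Proc B V} {a : B × V × V} {f : Bool → Proc B V} :
      PFunctor.M.dest P = ⟨.choice, f⟩ → PTrans Ty (f true) a P' → PTrans Ty P a P'
  | chr {P P' : Proc B V} {a : B × V × V} {f : Bool → Proc B V} :
      PFunctor.M.dest P = ⟨.choice, f⟩ → PTrans Ty (f false) a P' → PTrans Ty P a P'

/-- The process operational semantics as an event system. -/
def pES {B V : Type} (Ty : B → V → Set V) : ES (Proc B V) (B × V × V) := ⟨PTrans Ty⟩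

/-- Countable (ℕ-indexed) choice, defined corecursively from binary choice. -/
def vchoice {B V : Type} (f : ℕ → Proc B V) : Proc B V :=
  PFunctor.M.corec
    (fun s : Proc B V ⊕ ℕ =>
      match s with
      | .inl p => ⟨(PFunctor.M.dest p).1, fun x => Sum.inl ((PFunctor.M.dest p).2 x)⟩
      | .inr n => ⟨.choice, fun x : Bool => if x then Sum.inl (f n) else Sum.inr (n + 1)⟩)
    (Sum.inr 0)

/-! ## Embedding of processes into assertions -/

/-- States of the corecursion defining the embedding `emb`. -/
inductive EmbSt (B V Pl : Type) : Type
  | proc (P : Proc B V) (t : Pl)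
  | ex1 (b : B) (v : V) (k : V → Proc B V) (t t' : Pl)
  | star1 (b : B) (v : V) (k : V → Proc B V) (t t' : Pl) (z : V)
  | leafChunk (c : Chunk B V Pl)

/-- One step of the corecursion defining the embedding `emb`. -/
def embStep {B V Pl : Type} : EmbSt B V Pl → (AssnF B V Pl).Obj (EmbSt B V Pl)
  | .proc P t =>
    match PFunctor.M.dest P with
    | ⟨.null, _⟩ => ⟨.bool true, fun e => e.elim⟩
    | ⟨.pre b v, k⟩ => ⟨.expl, fun t' => .ex1 b v k t t'⟩
    | ⟨.choice, f⟩ => ⟨.star, fun x : Bool => .proc (f x) t⟩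
  | .ex1 b v k t t' => ⟨.exv, fun z => .star1 b v k t t' z⟩
  | .star1 b v k t t' z =>
      ⟨.star, fun x : Bool => if x then .leafChunk (.bio b t v z t') else .proc (k z) t'⟩
  | .leafChunk c => ⟨.chunk c, fun e => e.elim⟩

/-- The embedding `emb(P, t)` of a process and a place into an assertion:
`emb(Null, t) = true`, `emb(bio(v,z).P, t) = ∃t',z'. bio(t,v,z',t') ⋆ emb(P[z'/z], t')`,
`emb(P₁ ⊕ P₂, t) = emb(P₁, t) ⋆ emb(P₂, t)`. -/
def embA {B V Pl : Type} (P : Proc B V) (t : Pl) : Assn B V Pl :=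
  PFunctor.M.corec embStep (.proc P t)

/-- The process assertion `emb(P) = ∃t. token(t) ⋆ emb(P, t)`. -/
def procAssn {B V : Type} (Pl : Type) (P : Proc B V) : Assn B V Pl :=
  Assn.expl (fun t => Assn.star (Assn.mkChunk (.token t)) (embA P t))

/-- ℕ-indexed iterated separating conjunction, defined corecursively. -/
def AllStar {B V Pl : Type} (f : ℕ → Assn B V Pl) : Assn B V Pl :=
  PFunctor.M.corec
    (fun s : Assn B V Pl ⊕ ℕ =>
      match s with
      | .inl a => ⟨(PFunctor.M.dest a).1, fun x => Sum.inl ((PFunctor.M.dest a).2 x)⟩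
      | .inr n => ⟨.star, fun x : Bool => if x then Sum.inl (f n) else Sum.inr (n + 1)⟩)
    (Sum.inr 0)

/-! ## I/O-guarded event systems and their translation to processes -/

/-- An I/O-guarded event system: guards depend only on the state and the output,
updates compute the next state from output and input. -/
structure IOGES (B V S : Type) where
  guard : B → V → S → Prop
  update : B → V → V → S → S

/-- The event system associated with an I/O-guarded event system:
`s →bio(v,w) s'` iff the guard holds, `w ∈ Ty(bio, v)`, and `s' = U(s)`. -/
def IOGES.es {B V S : Type} (G : IOGES B V S) (Ty : B → V → Set V) : ES S (B × V × V) :=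
  ⟨fun s a s' => G.guard a.1 a.2.1 s ∧ a.2.2 ∈ Ty a.1 a.2.1 ∧
      s' = G.update a.1 a.2.1 a.2.2 s⟩

/-- States of the corecursion defining `proc(G, s)`. -/
inductive PrSt (S : Type) : Type
  | spine (n : ℕ) (s : S)
  | item (n : ℕ) (s : S)

open Classical in
/-- The corecursive translation `proc(G, s)` of an I/O-guarded event system into
a process: the countable choice over all `bio ∈ Bios` and outputs `v` whose guard
holds in `s` of the prefixed processes `bio(v, z). proc(G, U_{bio(v,z)}(s))`,
via an enumeration `e` of the pairs `(bio, v)`. -/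
noncomputable def procOf {B V S : Type} (e : ℕ → B × V) (G : IOGES B V S) (s : S) :
    Proc B V :=
  PFunctor.M.corec
    (fun st : PrSt S =>
      match st with
      | .spine n s => ⟨.choice, fun x : Bool => if x then .item n s else .spine (n + 1) s⟩
      | .item n s =>
          if G.guard (e n).1 (e n).2 s then
            ⟨.pre (e n).1 (e n).2, fun w => .spine 0 (G.update (e n).1 (e n).2 w s)⟩
          else ⟨.null, fun x => x.elim⟩)
    (.spine 0 s)

/-! ## Canonical heap models -/

open Classical in
/-- The I/O permission (as a singleton heap, or the empty heap) found at position
`pos` of process `P` under input schedule `ρ`, with previous place `pp`,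
current position `cp`, and traversed trace `τ`. -/
noncomputable def pm {B V : Type} (ρ : List (B × V × V) → B → V → V) :
    Proc B V → List (B × V × V) → List Bool → List Bool → List Bool →
      Heap B V (List Bool)
  | P, τ, pp, cp, [] =>
    (match PFunctor.M.dest P with
     | ⟨.pre b v, _⟩ => Heap.single (Chunk.bio b pp v (ρ τ b v) (cp ++ [true]))
     | _ => 0)
  | P, τ, pp, cp, d :: pos =>
    (match PFunctor.M.dest P, d with
     | ⟨.pre b v, k⟩, true =>
         pm ρ (k (ρ τ b v)) (τ ++ [(b, v, ρ τ b v)]) (cp ++ [true]) (cp ++ [true]) pos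
     | ⟨.choice, f⟩, d' => pm ρ (f d') τ pp (cp ++ [d']) pos
     | _, _ => 0)

/-- Pointwise (possibly infinite) sum of a family of heaps. -/
noncomputable def hSum {B V Pl ι : Type} (f : ι → Heap B V Pl) : Heap B V Pl :=
  fun c => ⨆ F : Finset ι, ∑ i ∈ F, f i c

/-- The canonical model construction `gmod(P, ρ, τ, ppos, cpos)`: the multiset
sum of `pm(P, ρ, τ, ppos, cpos, pos)` over all positions `pos`. -/
noncomputable def gmod {B V : Type} (ρ : List (B × V × V) → B → V → V)
    (P : Proc B V) (τ : List (B × V × V)) (pp cp : List Bool) :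
    Heap B V (List Bool) :=
  hSum (fun pos : List Bool => pm ρ P τ pp cp pos)

/-- Well-typedness of an input schedule. -/
def schedWT {B V : Type} (Ty : B → V → Set V) (ρ : List (B × V × V) → B → V → V) : Prop :=
  ∀ τ b v, ρ τ b v ∈ Ty b v

/-- The canonical model `cmod(P, ρ) = gmod(P, ρ, [], [], [])`. -/
noncomputable def cmod {B V : Type} (ρ : List (B × V × V) → B → V → V) (P : Proc B V) :
    Heap B V (List Bool) :=
  gmod ρ P [] [] []

/-- The canonical model with a token added at the previous place. -/
noncomputable def gmodTok {B V : Type} (ρ : List (B × V × V) → B → V → V)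
    (P : Proc B V) (τ : List (B × V × V)) (pp cp : List Bool) :
    Heap B V (List Bool) :=
  Heap.single (Chunk.token pp) + gmod ρ P τ pp cp

/-- The set `can(P)` of token-added canonical models over all well-typed schedules. -/
def canSet {B V : Type} (Ty : B → V → Set V) (P : Proc B V) :
    Set (Heap B V (List Bool)) :=
  {h | ∃ ρ, schedWT Ty ρ ∧ h = Heap.single (Chunk.token []) + cmod ρ P}

/-- The set of source places of I/O permissions in a heap. -/
def srcplaces {B V Pl : Type} (h : Heap B V Pl) : Set Pl :=
  {t | ∃ b v w t', 0 < h (Chunk.bio b t v w t')}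

/-- A heap is dead for a position if it has no tokens and no source place
extending the position. -/
def deadFor {B V : Type} (pos : List Bool) (h : Heap B V (List Bool)) : Prop :=
  (∀ t, h (Chunk.token t) = 0) ∧ ∀ p' ∈ srcplaces h, ¬ pos <+: p'

open Classical in
/-- The witness schedule `ρwit(σ)`: for proper prefixes `τ` of `σ`, return the
input of the next matching action of `σ`; otherwise an arbitrary well-typed value
(given by `pick`). -/
noncomputable def rhoWit {B V : Type} (pick : B → V → V) (σ : List (B × V × V)) :
    List (B × V × V) → B → V → V :=
  fun τ b v =>
    if h : ∃ w, ∃ rest, τ <+: σ ∧ σ.drop τ.length = (b, v, w) :: rest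
    then h.choose
    else pick b v

/-! ### Auxiliary lemmas -/

section AuxES

namespace ES
variable {S E : Type} {M : ES S E}

theorem mtrans_eq_nil {s s' : S} {τ : List E} (h : M.mtrans s τ s') (hτ : τ = []) : s = s' := by
  induction h with
  | nil => rfl
  | snoc h1 h2 ih => simp at hτ

theorem mtrans_cons_inv {s s'' : S} {τ : List E} (h : M.mtrans s τ s'') :
    ∀ e τ', τ = e :: τ' → ∃ s', M.trans s e s' ∧ M.mtrans s' τ' s'' := by
  induction h with
  | nil => intro e τ' he; simp at he
  | @snoc s1 s2 τ0 e0 h1 h2 ih =>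
    intro e τ' he
    rcases τ0 with _ | ⟨e1, τ1⟩
    · simp at he
      obtain ⟨rfl, rfl⟩ := he
      have h0 := mtrans_eq_nil h1 rfl
      exact ⟨s2, h0 ▸ h2, ES.mtrans.nil s2⟩
    · simp at he
      obtain ⟨rfl, rfl⟩ := he
      obtain ⟨m, hm1, hm2⟩ := ih _ τ1 rfl
      exact ⟨m, hm1, ES.mtrans.snoc hm2 h2⟩

theorem mtrans_append {s s' s'' : S} {τ1 τ2 : List E} (h2 : M.mtrans s' τ2 s'') :
    M.mtrans s τ1 s' → M.mtrans s (τ1 ++ τ2) s'' := by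
  induction h2 with
  | nil => intro h1; simpa using h1
  | snoc hm ht ih => intro h1; rw [← List.append_assoc]; exact ES.mtrans.snoc (ih h1) ht

theorem mtrans_cons {s s' s'' : S} {e : E} {τ : List E}
    (h1 : M.trans s e s') (h2 : M.mtrans s' τ s'') : M.mtrans s (e :: τ) s'' := by
  have h0 : M.mtrans s [e] s' := by
    simpa using ES.mtrans.snoc (ES.mtrans.nil s) h1
  simpa using mtrans_append h2 h0

theorem mem_tracesFrom {s : S} {τ : List E} :
    τ ∈ M.tracesFrom s ↔ ∃ s', M.mtrans s τ s' := by
  simp [ES.tracesFrom, ES.traces, Set.mem_setOf_eq]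

end ES

end AuxES

section AuxHeap

variable {B V Pl : Type}

theorem Heap.single_apply_self (c : Chunk B V Pl) : Heap.single c c = 1 := by
  simp [Heap.single]

theorem Heap.single_apply_ne {c c' : Chunk B V Pl} (h : c' ≠ c) : Heap.single c c' = 0 := by
  simp [Heap.single, h]

theorem Heap.single_ne_top (c c' : Chunk B V Pl) : Heap.single c c' ≠ ⊤ := by
  unfold Heap.single
  split <;> simp

theorem heap_split_single {h : Heap B V Pl} {c : Chunk B V Pl} (hc : 0 < h c) :
    ∃ h', h = Heap.single c + h' := by
  refine ⟨fun c' => h c' - Heap.single c c', funext fun c' => ?_⟩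
  show h c' = Heap.single c c' + (h c' - Heap.single c c')
  by_cases hc' : c' = c
  · subst hc'
    rw [Heap.single_apply_self]
    exact (add_tsub_cancel_of_le (Order.one_le_iff_pos.mpr hc)).symm
  · rw [Heap.single_apply_ne hc']
    simp

theorem heap_cancel {a h1 h2 : Heap B V Pl} (ha : ∀ c, a c ≠ ⊤) (h : a + h1 = a + h2) :
    h1 = h2 :=
  funext fun c => WithTop.add_left_cancel (ha c) (congrFun h c)

theorem enat_pos_add {a b : ℕ∞} (h : 0 < a + b) : 0 < a ∨ 0 < b := by
  rcases eq_or_ne a 0 with rfl | ha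
  · right; simpa using h
  · left; exact lt_of_le_of_ne zero_le (Ne.symm ha)

end AuxHeap

section AuxHSum

variable {B V Pl ι κ : Type}

theorem hsum_mono (f : ι → Heap B V Pl) (c : Chunk B V Pl) :
    Monotone (fun F : Finset ι => ∑ i ∈ F, f i c) :=
  fun _ _ h => Finset.sum_le_sum_of_subset h

theorem hSum_apply_eq_zero {f : ι → Heap B V Pl} {c : Chunk B V Pl}
    (h : ∀ i, f i c = 0) : hSum f c = 0 := by
  simp [hSum, h]

theorem hSum_zero : hSum (fun _ : ι => (0 : Heap B V Pl)) = 0 := by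
  funext c
  exact hSum_apply_eq_zero fun _ => rfl

theorem hSum_apply_pos {f : ι → Heap B V Pl} {c : Chunk B V Pl}
    (h : 0 < hSum f c) : ∃ i, 0 < f i c := by
  by_contra hc
  push_neg at hc
  have h0 : hSum f c = 0 := hSum_apply_eq_zero fun i => le_antisymm (hc i) zero_le
  rw [h0] at h
  exact lt_irrefl _ h

theorem hSum_congr {f g : ι → Heap B V Pl} (h : ∀ i, f i = g i) : hSum f = hSum g := by
  rw [funext h]

theorem hSum_add (f g : ι → Heap B V Pl) :
    hSum (fun i => f i + g i) = hSum f + hSum g := by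
  funext c
  show (⨆ F : Finset ι, ∑ i ∈ F, (f i + g i) c)
      = (⨆ F : Finset ι, ∑ i ∈ F, f i c) + ⨆ F : Finset ι, ∑ i ∈ F, g i c
  have he : ∀ F : Finset ι, ∑ i ∈ F, (f i + g i) c = (∑ i ∈ F, f i c) + ∑ i ∈ F, g i c := by
    intro F; simp [Finset.sum_add_distrib]
  simp only [he]
  exact (ENat.iSup_add_iSup_of_monotone (hsum_mono f c) (hsum_mono g c)).symm

theorem hSum_sumElim (f : ι ⊕ κ → Heap B V Pl) :
    hSum f = hSum (fun i => f (.inl i)) + hSum (fun j => f (.inr j)) := by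
  funext c
  apply le_antisymm
  · refine iSup_le fun F => ?_
    have hF : ∑ x ∈ F, f x c
        = (∑ i ∈ F.toLeft, f (.inl i) c) + ∑ j ∈ F.toRight, f (.inr j) c := by
      conv_lhs => rw [← Finset.toLeft_disjSum_toRight (u := F)]
      rw [Finset.sum_disjSum]
    rw [hF]
    exact add_le_add (le_iSup (fun F : Finset ι => ∑ i ∈ F, f (.inl i) c) F.toLeft)
      (le_iSup (fun F : Finset κ => ∑ j ∈ F, f (.inr j) c) F.toRight)
  · refine ENat.iSup_add_iSup_le fun F1 F2 => ?_
    have hF : (∑ i ∈ F1, f (.inl i) c) + ∑ j ∈ F2, f (.inr j) c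
        = ∑ x ∈ F1.disjSum F2, f x c := (Finset.sum_disjSum F1 F2 (fun x => f x c)).symm
    rw [hF]
    exact le_iSup (fun F : Finset (ι ⊕ κ) => ∑ x ∈ F, f x c) _

theorem hSum_equiv (e : κ ≃ ι) (f : ι → Heap B V Pl) :
    hSum (fun k => f (e k)) = hSum f := by
  funext c
  apply le_antisymm
  · refine iSup_le fun F => ?_
    have h1 : ∑ k ∈ F, f (e k) c = ∑ i ∈ F.map e.toEmbedding, f i c := by
      rw [Finset.sum_map]; rfl
    rw [h1]
    exact le_iSup (fun F : Finset ι => ∑ i ∈ F, f i c) _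
  · refine iSup_le fun F => ?_
    have h1 : ∑ i ∈ F, f i c = ∑ k ∈ F.map e.symm.toEmbedding, f (e k) c := by
      rw [Finset.sum_map]; simp
    rw [h1]
    exact le_iSup (fun F : Finset κ => ∑ k ∈ F, f (e k) c) _

def consEquiv : Unit ⊕ (List Bool ⊕ List Bool) ≃ List Bool where
  toFun := fun x => match x with
    | .inl _ => []
    | .inr (.inl l) => true :: l
    | .inr (.inr l) => false :: l
  invFun := fun l => match l with
    | [] => .inl ()
    | true :: l => .inr (.inl l)
    | false :: l => .inr (.inr l)
  left_inv := by rintro (⟨⟩ | (l | l)) <;> rfl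
  right_inv := by
    rintro (_ | ⟨b, l⟩)
    · rfl
    · cases b <;> rfl

theorem hSum_unit (f : Unit → Heap B V Pl) : hSum f = f () := by
  funext c
  apply le_antisymm
  · refine iSup_le fun F => ?_
    have hsub : F ⊆ {()} := fun x _ => by simp
    calc ∑ i ∈ F, f i c ≤ ∑ i ∈ ({()} : Finset Unit), f i c :=
          Finset.sum_le_sum_of_subset hsub
      _ = f () c := Finset.sum_singleton _ _
  · exact le_iSup_of_le {()} (le_of_eq (Finset.sum_singleton _ _).symm)

theorem hSum_listBool (f : List Bool → Heap B V Pl) :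
    hSum f = f [] + (hSum (fun l => f (true :: l)) + hSum (fun l => f (false :: l))) := by
  have h1 : hSum (fun x : Unit ⊕ (List Bool ⊕ List Bool) => f (consEquiv x)) = hSum f :=
    hSum_equiv _ _
  rw [← h1, hSum_sumElim, hSum_sumElim, hSum_unit]
  rfl

end AuxHSum
section AuxSat

variable {B V Pl : Type} {Ty : B → V → Set V}

theorem SatF_mono {R R' : Heap B V Pl → Assn B V Pl → Prop}
    (h : ∀ hp φ, R hp φ → R' hp φ) :
    ∀ hp φ, SatF Ty R hp φ → SatF Ty R' hp φ := by
  intro hp φ hs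
  unfold SatF at hs ⊢
  rcases hφ : PFunctor.M.dest φ with ⟨hd, f⟩
  rw [hφ] at hs
  cases hd with
  | bool b => exact hs
  | chunk c => exact hs
  | star =>
    obtain ⟨h1, h2, he, r1, r2⟩ := hs
    exact ⟨h1, h2, he, h _ _ r1, h _ _ r2⟩
  | exv =>
    obtain ⟨v, r⟩ := hs
    exact ⟨v, h _ _ r⟩
  | expl =>
    obtain ⟨t, r⟩ := hs
    exact ⟨t, h _ _ r⟩

theorem sat_dest {hp : Heap B V Pl} {φ : Assn B V Pl} (h : sat Ty hp φ) :
    SatF Ty (sat Ty) hp φ := by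
  obtain ⟨R, hpost, hR⟩ := h
  exact SatF_mono (fun h' φ' hr => ⟨R, hpost, hr⟩) _ _ (hpost _ _ hR)

theorem sat_expl {hp : Heap B V Pl} {φ : Assn B V Pl} {f : Pl → Assn B V Pl}
    (h : sat Ty hp φ) (hd : PFunctor.M.dest φ = ⟨AssnHead.expl, f⟩) :
    ∃ t, sat Ty hp (f t) := by
  have hs := sat_dest h
  unfold SatF at hs
  rw [hd] at hs
  exact hs

theorem sat_exv {hp : Heap B V Pl} {φ : Assn B V Pl} {f : V → Assn B V Pl}
    (h : sat Ty hp φ) (hd : PFunctor.M.dest φ = ⟨AssnHead.exv, f⟩) :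
    ∃ v, sat Ty hp (f v) := by
  have hs := sat_dest h
  unfold SatF at hs
  rw [hd] at hs
  exact hs

theorem sat_star {hp : Heap B V Pl} {φ : Assn B V Pl} {f : Bool → Assn B V Pl}
    (h : sat Ty hp φ) (hd : PFunctor.M.dest φ = ⟨AssnHead.star, f⟩) :
    ∃ h1 h2, hp = h1 + h2 ∧ sat Ty h1 (f true) ∧ sat Ty h2 (f false) := by
  have hs := sat_dest h
  unfold SatF at hs
  rw [hd] at hs
  exact hs

theorem sat_chunk {hp : Heap B V Pl} {φ : Assn B V Pl} {c : Chunk B V Pl}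
    {f : Empty → Assn B V Pl}
    (h : sat Ty hp φ) (hd : PFunctor.M.dest φ = ⟨AssnHead.chunk c, f⟩) :
    0 < hp c ∧ c.wellTyped Ty := by
  have hs := sat_dest h
  unfold SatF at hs
  rw [hd] at hs
  exact hs

end AuxSat

section AuxEmb

variable {B V Pl : Type}

theorem dest_embA_null {P : Proc B V} {g : ProcAr B V ProcHead.null → Proc B V} {t : Pl}
    (hd : PFunctor.M.dest P = ⟨ProcHead.null, g⟩) :
    PFunctor.M.dest (embA (Pl := Pl) P t)
      = ⟨AssnHead.bool true, fun e : Empty => e.elim⟩ := by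
  rw [embA, PFunctor.M.dest_corec]
  simp only [embStep, hd, PFunctor.map_eq]
  exact congrArg (Sigma.mk _) (funext fun e => e.elim)

theorem dest_embA_pre {P : Proc B V} {b : B} {v : V} {k : V → Proc B V} {t : Pl}
    (hd : PFunctor.M.dest P = ⟨ProcHead.pre b v, k⟩) :
    PFunctor.M.dest (embA (Pl := Pl) P t)
      = ⟨AssnHead.expl, fun t' : Pl => PFunctor.M.corec embStep (EmbSt.ex1 b v k t t')⟩ := by
  rw [embA, PFunctor.M.dest_corec]
  simp only [embStep, hd, PFunctor.map_eq]
  rfl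

theorem dest_embA_choice {P : Proc B V} {f : Bool → Proc B V} {t : Pl}
    (hd : PFunctor.M.dest P = ⟨ProcHead.choice, f⟩) :
    PFunctor.M.dest (embA (Pl := Pl) P t)
      = ⟨AssnHead.star, fun x : Bool => embA (f x) t⟩ := by
  rw [embA, PFunctor.M.dest_corec]
  simp only [embStep, hd, PFunctor.map_eq]
  rfl

theorem dest_emb_ex1 {b : B} {v : V} {k : V → Proc B V} {t t' : Pl} :
    PFunctor.M.dest (PFunctor.M.corec (embStep (B := B) (V := V) (Pl := Pl)) (EmbSt.ex1 b v k t t'))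
      = ⟨AssnHead.exv, fun z : V => PFunctor.M.corec embStep (EmbSt.star1 b v k t t' z)⟩ := by
  rw [PFunctor.M.dest_corec]
  rfl

theorem dest_emb_star1 {b : B} {v : V} {k : V → Proc B V} {t t' : Pl} {z : V} :
    PFunctor.M.dest (PFunctor.M.corec (embStep (B := B) (V := V) (Pl := Pl)) (EmbSt.star1 b v k t t' z))
      = ⟨AssnHead.star, fun x : Bool =>
          PFunctor.M.corec embStep
            (if x then EmbSt.leafChunk (Chunk.bio b t v z t') else EmbSt.proc (k z) t')⟩ := by
  rw [PFunctor.M.dest_corec]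
  simp only [embStep, PFunctor.map_eq]
  exact congrArg (Sigma.mk _) (funext fun x => by cases x <;> rfl)

theorem dest_emb_leaf {c : Chunk B V Pl} :
    PFunctor.M.dest (PFunctor.M.corec (embStep (B := B) (V := V) (Pl := Pl)) (EmbSt.leafChunk c))
      = ⟨AssnHead.chunk c, fun e : Empty => e.elim⟩ := by
  rw [PFunctor.M.dest_corec]
  simp only [embStep, PFunctor.map_eq]
  exact congrArg (Sigma.mk _) (funext fun e => e.elim)

theorem dest_assn_expl (f : Pl → Assn B V Pl) :
    PFunctor.M.dest (Assn.expl f) = ⟨AssnHead.expl, f⟩ :=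
  PFunctor.M.dest_mk _

theorem dest_assn_star (φ ψ : Assn B V Pl) :
    PFunctor.M.dest (Assn.star φ ψ)
      = ⟨AssnHead.star, fun x : Bool => if x then φ else ψ⟩ :=
  PFunctor.M.dest_mk _

theorem dest_assn_chunk (c : Chunk B V Pl) :
    PFunctor.M.dest (Assn.mkChunk c) = ⟨AssnHead.chunk c, fun e : Empty => e.elim⟩ :=
  PFunctor.M.dest_mk _

end AuxEmb
section AuxPm

variable {B V : Type} {ρ : List (B × V × V) → B → V → V}

theorem pm_nil_pre {P : Proc B V} {b : B} {v : V} {k : V → Proc B V}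
    {τ : List (B × V × V)} {pp cp : List Bool}
    (hd : PFunctor.M.dest P = ⟨ProcHead.pre b v, k⟩) :
    pm ρ P τ pp cp [] = Heap.single (Chunk.bio b pp v (ρ τ b v) (cp ++ [true])) := by
  simp only [pm, hd]

theorem pm_nil_null {P : Proc B V} {g : ProcAr B V ProcHead.null → Proc B V}
    {τ : List (B × V × V)} {pp cp : List Bool}
    (hd : PFunctor.M.dest P = ⟨ProcHead.null, g⟩) :
    pm ρ P τ pp cp [] = 0 := by
  simp only [pm, hd]

theorem pm_nil_choice {P : Proc B V} {f : Bool → Proc B V}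
    {τ : List (B × V × V)} {pp cp : List Bool}
    (hd : PFunctor.M.dest P = ⟨ProcHead.choice, f⟩) :
    pm ρ P τ pp cp [] = 0 := by
  simp only [pm, hd]

theorem pm_cons_pre_true {P : Proc B V} {b : B} {v : V} {k : V → Proc B V}
    {τ : List (B × V × V)} {pp cp : List Bool} {pos : List Bool}
    (hd : PFunctor.M.dest P = ⟨ProcHead.pre b v, k⟩) :
    pm ρ P τ pp cp (true :: pos)
      = pm ρ (k (ρ τ b v)) (τ ++ [(b, v, ρ τ b v)]) (cp ++ [true]) (cp ++ [true]) pos := by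
  simp only [pm, hd]

theorem pm_cons_pre_false {P : Proc B V} {b : B} {v : V} {k : V → Proc B V}
    {τ : List (B × V × V)} {pp cp : List Bool} {pos : List Bool}
    (hd : PFunctor.M.dest P = ⟨ProcHead.pre b v, k⟩) :
    pm ρ P τ pp cp (false :: pos) = 0 := by
  simp only [pm, hd]

theorem pm_cons_choice {P : Proc B V} {f : Bool → Proc B V}
    {τ : List (B × V × V)} {pp cp : List Bool} {d : Bool} {pos : List Bool}
    (hd : PFunctor.M.dest P = ⟨ProcHead.choice, f⟩) :
    pm ρ P τ pp cp (d :: pos) = pm ρ (f d) τ pp (cp ++ [d]) pos := by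
  cases d <;> simp only [pm, hd]

theorem pm_cons_null {P : Proc B V} {g : ProcAr B V ProcHead.null → Proc B V}
    {τ : List (B × V × V)} {pp cp : List Bool} {d : Bool} {pos : List Bool}
    (hd : PFunctor.M.dest P = ⟨ProcHead.null, g⟩) :
    pm ρ P τ pp cp (d :: pos) = 0 := by
  cases d <;> simp only [pm, hd]

theorem gmod_eq (P : Proc B V) (τ : List (B × V × V)) (pp cp : List Bool) :
    gmod ρ P τ pp cp
      = pm ρ P τ pp cp []
        + (hSum (fun pos => pm ρ P τ pp cp (true :: pos))
            + hSum (fun pos => pm ρ P τ pp cp (false :: pos))) :=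
  hSum_listBool _

theorem gmod_null {P : Proc B V} {g : ProcAr B V ProcHead.null → Proc B V}
    {τ : List (B × V × V)} {pp cp : List Bool}
    (hd : PFunctor.M.dest P = ⟨ProcHead.null, g⟩) :
    gmod ρ P τ pp cp = 0 := by
  rw [gmod_eq, pm_nil_null hd]
  rw [hSum_congr (fun pos => pm_cons_null (d := true) hd),
    hSum_congr (fun pos => pm_cons_null (d := false) hd), hSum_zero]
  simp

theorem gmod_pre {P : Proc B V} {b : B} {v : V} {k : V → Proc B V}
    {τ : List (B × V × V)} {pp cp : List Bool}
    (hd : PFunctor.M.dest P = ⟨ProcHead.pre b v, k⟩) :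
    gmod ρ P τ pp cp
      = Heap.single (Chunk.bio b pp v (ρ τ b v) (cp ++ [true]))
        + gmod ρ (k (ρ τ b v)) (τ ++ [(b, v, ρ τ b v)]) (cp ++ [true]) (cp ++ [true]) := by
  rw [gmod_eq, pm_nil_pre hd]
  rw [hSum_congr (fun pos => pm_cons_pre_true hd),
    hSum_congr (fun pos => pm_cons_pre_false hd), hSum_zero]
  rw [add_zero]
  rfl

theorem gmod_choice {P : Proc B V} {f : Bool → Proc B V}
    {τ : List (B × V × V)} {pp cp : List Bool}
    (hd : PFunctor.M.dest P = ⟨ProcHead.choice, f⟩) :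
    gmod ρ P τ pp cp
      = gmod ρ (f true) τ pp (cp ++ [true]) + gmod ρ (f false) τ pp (cp ++ [false]) := by
  rw [gmod_eq, pm_nil_choice hd]
  rw [hSum_congr (fun pos => pm_cons_choice (d := true) hd),
    hSum_congr (fun pos => pm_cons_choice (d := false) hd)]
  rw [zero_add]
  rfl

end AuxPm
section AuxSub

variable {B V : Type} {ρ : List (B × V × V) → B → V → V}

inductive SubAt {B V : Type} : Proc B V → List Bool → Proc B V → Prop
  | refl (P) : SubAt P [] P
  | step {P Q : Proc B V} {f : Bool → Proc B V} {d : Bool} {pos : List Bool} :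
      PFunctor.M.dest P = ⟨ProcHead.choice, f⟩ → SubAt (f d) pos Q → SubAt P (d :: pos) Q

theorem ptrans_of_subAt {Ty : B → V → Set V} {P Q : Proc B V} {pos : List Bool}
    {b : B} {v w : V} {k : V → Proc B V} (hs : SubAt P pos Q)
    (hd : PFunctor.M.dest Q = ⟨ProcHead.pre b v, k⟩) (hw : w ∈ Ty b v) :
    PTrans Ty P (b, v, w) (k w) := by
  induction hs with
  | refl P => exact PTrans.pref hw hd
  | @step P Q f d pos h1 h2 ih =>
    cases d
    · exact PTrans.chr h1 (ih hd)
    · exact PTrans.chl h1 (ih hd)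

theorem pm_shape : ∀ (pos : List Bool) (P : Proc B V) (τ : List (B × V × V))
    (pp cp : List Bool) (c : Chunk B V (List Bool)),
    pm ρ P τ pp cp pos c ≠ 0 →
    ∃ b v w s1, c = Chunk.bio b s1 v w (cp ++ pos ++ [true]) ∧
      ((s1 = pp ∧ w = ρ τ b v ∧
          ∃ Q k, SubAt P pos Q ∧ PFunctor.M.dest Q = ⟨ProcHead.pre b v, k⟩)
        ∨ ∃ q, s1 = cp ++ q ∧ q ≠ []) := by
  intro pos
  induction pos with
  | nil =>
    intro P τ pp cp c hc
    rcases hP : PFunctor.M.dest P with ⟨hd, ch⟩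
    cases hd with
    | null => rw [pm_nil_null hP] at hc; simp at hc
    | choice => rw [pm_nil_choice hP] at hc; simp at hc
    | pre b v =>
      rw [pm_nil_pre hP] at hc
      have hce : c = Chunk.bio b pp v (ρ τ b v) (cp ++ [true]) := by
        by_contra hne
        rw [Heap.single_apply_ne hne] at hc
        exact hc rfl
      subst hce
      exact ⟨b, v, _, pp, by simp, Or.inl ⟨rfl, rfl, _, ch, SubAt.refl P, hP⟩⟩
  | cons d pos ih =>
    intro P τ pp cp c hc
    rcases hP : PFunctor.M.dest P with ⟨hd, ch⟩
    cases hd with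
    | null => rw [pm_cons_null hP] at hc; simp at hc
    | pre b v =>
      cases d with
      | false => rw [pm_cons_pre_false hP] at hc; simp at hc
      | true =>
        rw [pm_cons_pre_true hP] at hc
        obtain ⟨b', v', w', s1, hceq, hcase⟩ := ih _ _ _ _ _ hc
        refine ⟨b', v', w', s1, by simpa using hceq, Or.inr ?_⟩
        rcases hcase with ⟨rfl, _⟩ | ⟨q, rfl, hq⟩
        · exact ⟨[true], rfl, by simp⟩
        · exact ⟨true :: q, by simp, by simp⟩
    | choice =>
      rw [pm_cons_choice hP] at hc
      obtain ⟨b', v', w', s1, hceq, hcase⟩ := ih _ _ _ _ _ hc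
      refine ⟨b', v', w', s1, by simpa using hceq, ?_⟩
      rcases hcase with ⟨rfl, hw, Q, k, hsub, hQ⟩ | ⟨q, rfl, hq⟩
      · exact Or.inl ⟨rfl, hw, Q, k, SubAt.step hP hsub, hQ⟩
      · exact Or.inr ⟨d :: q, by simp, by simp⟩

theorem gmod_token (P : Proc B V) (τ : List (B × V × V)) (pp cp : List Bool) (x : List Bool) :
    gmod ρ P τ pp cp (Chunk.token x) = 0 :=
  hSum_apply_eq_zero fun pos => by
    by_contra h
    obtain ⟨b, v, w, s1, hceq, -⟩ := pm_shape pos P τ pp cp _ h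
    simp at hceq

theorem gmod_src {P : Proc B V} {τ : List (B × V × V)} {pp cp : List Bool}
    {b : B} {s1 : List Bool} {v w : V} {t1 : List Bool}
    (h : 0 < gmod ρ P τ pp cp (Chunk.bio b s1 v w t1)) :
    s1 = pp ∨ ∃ q, s1 = cp ++ q ∧ q ≠ [] := by
  obtain ⟨pos, hpos⟩ := hSum_apply_pos h
  obtain ⟨b', v', w', s1', hceq, hcase⟩ := pm_shape pos P τ pp cp _ hpos.ne'
  obtain ⟨rfl, rfl, rfl, rfl, rfl⟩ : b = b' ∧ s1 = s1' ∧ v = v' ∧ w = w'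
      ∧ t1 = cp ++ pos ++ [true] := by
    simpa using hceq
  exact hcase.imp (fun h => h.1) id

theorem gmod_decomp {P Q : Proc B V} {pos : List Bool} {b : B} {v : V} {k : V → Proc B V}
    (hsub : SubAt P pos Q) (hQ : PFunctor.M.dest Q = ⟨ProcHead.pre b v, k⟩) :
    ∀ (τ : List (B × V × V)) (pp cp : List Bool),
      ∃ dead : Heap B V (List Bool),
        gmod ρ P τ pp cp
          = Heap.single (Chunk.bio b pp v (ρ τ b v) (cp ++ pos ++ [true]))
            + gmod ρ (k (ρ τ b v)) (τ ++ [(b, v, ρ τ b v)])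
                (cp ++ pos ++ [true]) (cp ++ pos ++ [true])
            + dead
        ∧ (∀ x, dead (Chunk.token x) = 0)
        ∧ ∀ b' s1 v' w' t1, 0 < dead (Chunk.bio b' s1 v' w' t1) →
            s1 = pp ∨ ∃ q, s1 = cp ++ q ∧ ¬ (pos ++ [true]) <+: q := by
  induction hsub with
  | refl P =>
    intro τ pp cp
    refine ⟨0, ?_, fun x => rfl, fun b' s1 v' w' t1 h => by simp at h⟩
    rw [gmod_pre hQ]
    simp
  | @step P Q f d pos hd hsub ih =>
    intro τ pp cp
    obtain ⟨dead, hdec, hdt, hds⟩ := ih hQ τ pp (cp ++ [d])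
    have hl : (cp ++ [d]) ++ pos ++ [true] = cp ++ (d :: pos) ++ [true] := by simp
    rw [hl] at hdec
    refine ⟨dead + gmod ρ (f !d) τ pp (cp ++ [!d]), ?_, ?_, ?_⟩
    · rw [gmod_choice hd]
      cases d
      · simp only [Bool.not_false]
        rw [hdec]
        abel
      · simp only [Bool.not_true]
        rw [hdec]
        abel
    · intro x
      show dead (Chunk.token x) + gmod ρ (f !d) τ pp (cp ++ [!d]) (Chunk.token x) = 0
      rw [hdt, gmod_token, add_zero]
    · intro b' s1 v' w' t1 h
      rcases enat_pos_add h with h1 | h2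
      · rcases hds b' s1 v' w' t1 h1 with h | ⟨q, rfl, hq⟩
        · exact Or.inl h
        · refine Or.inr ⟨d :: q, by simp, ?_⟩
          rw [List.cons_append]
          intro hpre
          exact hq (List.cons_prefix_cons.mp hpre).2
      · rcases gmod_src h2 with h | ⟨q, rfl, hq⟩
        · exact Or.inl h
        · refine Or.inr ⟨(!d) :: q, by simp, ?_⟩
          rw [List.cons_append]
          intro hpre
          have := (List.cons_prefix_cons.mp hpre).1
          cases d <;> simp at this

end AuxSub

section AuxCanR

variable {B V : Type}

inductive CanR (Ty : B → V → Set V) (ρ : List (B × V × V) → B → V → V) :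
    Heap B V (List Bool) → Assn B V (List Bool) → Prop
  | proc (P τ pp cp) : CanR Ty ρ (gmod ρ P τ pp cp) (embA P pp)
  | ex1 {P : Proc B V} {b v k} (τ pp cp)
      (hd : PFunctor.M.dest P = ⟨ProcHead.pre b v, k⟩) :
      CanR Ty ρ (gmod ρ P τ pp cp)
        (PFunctor.M.corec embStep (EmbSt.ex1 b v k pp (cp ++ [true])))
  | star1 {P : Proc B V} {b v k} (τ pp cp)
      (hd : PFunctor.M.dest P = ⟨ProcHead.pre b v, k⟩) :
      CanR Ty ρ (gmod ρ P τ pp cp)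
        (PFunctor.M.corec embStep (EmbSt.star1 b v k pp (cp ++ [true]) (ρ τ b v)))
  | leaf {c} (hc : c.wellTyped Ty) :
      CanR Ty ρ (Heap.single c) (PFunctor.M.corec embStep (EmbSt.leafChunk c))
  | chunkA {c} (hc : c.wellTyped Ty) : CanR Ty ρ (Heap.single c) (Assn.mkChunk c)
  | tokstar (P) :
      CanR Ty ρ (Heap.single (Chunk.token []) + cmod ρ P)
        (Assn.star (Assn.mkChunk (Chunk.token [])) (embA P []))
  | top (P) : CanR Ty ρ (Heap.single (Chunk.token []) + cmod ρ P) (procAssn (List Bool) P)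

theorem CanR_post {Ty : B → V → Set V} {ρ : List (B × V × V) → B → V → V}
    (hρ : schedWT Ty ρ) :
    ∀ h φ, CanR Ty ρ h φ → SatF Ty (CanR Ty ρ) h φ := by
  intro h φ hc
  cases hc with
  | proc P τ pp cp =>
    unfold SatF
    rcases hP : PFunctor.M.dest P with ⟨hd, ch⟩
    cases hd with
    | null =>
      rw [dest_embA_null hP]
    | pre b v =>
      rw [dest_embA_pre hP]
      exact ⟨cp ++ [true], CanR.ex1 τ pp cp hP⟩
    | choice =>
      rw [dest_embA_choice hP]
      exact ⟨_, _, gmod_choice hP, CanR.proc _ τ pp (cp ++ [true]),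
        CanR.proc _ τ pp (cp ++ [false])⟩
  | ex1 τ pp cp hd =>
    unfold SatF
    erw [dest_emb_ex1]
    exact ⟨_, CanR.star1 τ pp cp hd⟩
  | @star1 P b v k τ pp cp hd =>
    unfold SatF
    erw [dest_emb_star1]
    refine ⟨_, _, gmod_pre hd, ?_, ?_⟩
    · simp only [if_true]
      exact CanR.leaf (hρ τ b v)
    · simp only [if_false]
      exact CanR.proc (k (ρ τ b v)) (τ ++ [(b, v, ρ τ b v)]) (cp ++ [true]) (cp ++ [true])
  | leaf hc =>
    unfold SatF
    rw [dest_emb_leaf]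
    refine ⟨?_, hc⟩
    rw [Heap.single_apply_self]
    exact zero_lt_one
  | chunkA hc =>
    unfold SatF
    rw [dest_assn_chunk]
    refine ⟨?_, hc⟩
    rw [Heap.single_apply_self]
    exact zero_lt_one
  | tokstar P =>
    unfold SatF
    rw [dest_assn_star]
    refine ⟨_, _, rfl, ?_, ?_⟩
    · simp only [if_true]
      exact CanR.chunkA trivial
    · simp only [if_false]
      exact CanR.proc P [] [] []
  | top P =>
    unfold SatF
    rw [procAssn, dest_assn_expl]
    exact ⟨[], CanR.tokstar P⟩

theorem sat_canonical {Ty : B → V → Set V} {ρ : List (B × V × V) → B → V → V}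
    (hρ : schedWT Ty ρ) (P : Proc B V) :
    sat Ty (Heap.single (Chunk.token []) + cmod ρ P) (procAssn (List Bool) P) :=
  ⟨CanR Ty ρ, CanR_post hρ, CanR.top P⟩

end AuxCanR
section AuxProcOf

variable {B V S : Type}

open Classical in
/-- The corecursion step function of `procOf`. -/
noncomputable def pFn (e : ℕ → B × V) (G : IOGES B V S) :
    PrSt S → (ProcF B V).Obj (PrSt S) := fun st =>
  match st with
  | .spine n s => ⟨.choice, fun x : Bool => if x then .item n s else .spine (n + 1) s⟩
  | .item n s =>
      if G.guard (e n).1 (e n).2 s then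
        ⟨.pre (e n).1 (e n).2, fun w => .spine 0 (G.update (e n).1 (e n).2 w s)⟩
      else ⟨.null, fun x => x.elim⟩

theorem procOf_def (e : ℕ → B × V) (G : IOGES B V S) (s : S) :
    procOf e G s = PFunctor.M.corec (pFn e G) (PrSt.spine 0 s) := rfl

theorem dest_spine (e : ℕ → B × V) (G : IOGES B V S) (n : ℕ) (s : S) :
    PFunctor.M.dest (PFunctor.M.corec (pFn e G) (PrSt.spine n s))
      = ⟨ProcHead.choice, fun x : Bool =>
          if x then PFunctor.M.corec (pFn e G) (PrSt.item n s)
          else PFunctor.M.corec (pFn e G) (PrSt.spine (n + 1) s)⟩ := by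
  rw [PFunctor.M.dest_corec]
  simp only [pFn, PFunctor.map_eq]
  exact congrArg (Sigma.mk _) (funext fun x => by cases x <;> rfl)

theorem dest_item_pos {e : ℕ → B × V} {G : IOGES B V S} {n : ℕ} {s : S}
    (hg : G.guard (e n).1 (e n).2 s) :
    PFunctor.M.dest (PFunctor.M.corec (pFn e G) (PrSt.item n s))
      = ⟨ProcHead.pre (e n).1 (e n).2,
          fun w => procOf e G (G.update (e n).1 (e n).2 w s)⟩ := by
  rw [PFunctor.M.dest_corec]
  simp only [pFn]
  erw [if_pos hg]
  rfl

theorem dest_item_neg {e : ℕ → B × V} {G : IOGES B V S} {n : ℕ} {s : S}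
    (hg : ¬ G.guard (e n).1 (e n).2 s) :
    PFunctor.M.dest (PFunctor.M.corec (pFn e G) (PrSt.item n s))
      = ⟨ProcHead.null, fun x : Empty => x.elim⟩ := by
  rw [PFunctor.M.dest_corec]
  simp only [pFn]
  erw [if_neg hg]
  exact congrArg (Sigma.mk _) (funext fun x => x.elim)

theorem procOf_step_inv {Ty : B → V → Set V} {e : ℕ → B × V} {G : IOGES B V S}
    {P P' : Proc B V} {a : B × V × V} (h : PTrans Ty P a P') :
    ∀ n s, (P = PFunctor.M.corec (pFn e G) (PrSt.spine n s)
        ∨ P = PFunctor.M.corec (pFn e G) (PrSt.item n s)) →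
    ∃ b v w, a = (b, v, w) ∧ G.guard b v s ∧ w ∈ Ty b v
      ∧ P' = procOf e G (G.update b v w s) := by
  induction h with
  | @pref P b v w k hw hd =>
    intro n s hst
    rcases hst with rfl | rfl
    · rw [dest_spine] at hd
      exact absurd (Sigma.mk.inj_iff.mp hd).1 (by simp)
    · by_cases hg : G.guard (e n).1 (e n).2 s
      · rw [dest_item_pos hg] at hd
        obtain ⟨hh, hk⟩ := Sigma.mk.inj_iff.mp hd
        obtain ⟨hb, hv⟩ := ProcHead.pre.inj hh
        subst hb; subst hv
        have hkk := eq_of_heq hk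
        exact ⟨_, _, w, rfl, hg, hw, by rw [← hkk]⟩
      · rw [dest_item_neg hg] at hd
        exact absurd (Sigma.mk.inj_iff.mp hd).1 (by simp)
  | @chl P P' a f hd hsub ih =>
    intro n s hst
    rcases hst with rfl | rfl
    · rw [dest_spine] at hd
      have hf := eq_of_heq (Sigma.mk.inj_iff.mp hd).2
      apply ih n s
      right
      rw [← hf]
      simp
      rfl
    · by_cases hg : G.guard (e n).1 (e n).2 s
      · rw [dest_item_pos hg] at hd
        exact absurd (Sigma.mk.inj_iff.mp hd).1 (by simp)
      · rw [dest_item_neg hg] at hd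
        exact absurd (Sigma.mk.inj_iff.mp hd).1 (by simp)
  | @chr P P' a f hd hsub ih =>
    intro n s hst
    rcases hst with rfl | rfl
    · rw [dest_spine] at hd
      have hf := eq_of_heq (Sigma.mk.inj_iff.mp hd).2
      apply ih (n + 1) s
      left
      rw [← hf]
      simp
      rfl
    · by_cases hg : G.guard (e n).1 (e n).2 s
      · rw [dest_item_pos hg] at hd
        exact absurd (Sigma.mk.inj_iff.mp hd).1 (by simp)
      · rw [dest_item_neg hg] at hd
        exact absurd (Sigma.mk.inj_iff.mp hd).1 (by simp)

theorem procOf_trans_inv {Ty : B → V → Set V} {e : ℕ → B × V} {G : IOGES B V S}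
    {s : S} {P' : Proc B V} {a : B × V × V} (h : PTrans Ty (procOf e G s) a P') :
    ∃ b v w, a = (b, v, w) ∧ G.guard b v s ∧ w ∈ Ty b v
      ∧ P' = procOf e G (G.update b v w s) :=
  procOf_step_inv h 0 s (Or.inl (procOf_def e G s))

theorem trans_spine {Ty : B → V → Set V} {e : ℕ → B × V} {G : IOGES B V S}
    {n : ℕ} {s : S} {a : B × V × V} {Q : Proc B V}
    (h : PTrans Ty (PFunctor.M.corec (pFn e G) (PrSt.item n s)) a Q) :
    ∀ k m, m + k = n → PTrans Ty (PFunctor.M.corec (pFn e G) (PrSt.spine m s)) a Q := by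
  intro k
  induction k with
  | zero =>
    intro m hm
    rw [Nat.add_zero] at hm
    subst hm
    refine PTrans.chl (dest_spine e G m s) ?_
    simpa using h
  | succ k ih =>
    intro m hm
    refine PTrans.chr (dest_spine e G m s) ?_
    have : PTrans Ty (PFunctor.M.corec (pFn e G) (PrSt.spine (m + 1) s)) a Q :=
      ih (m + 1) (by omega)
    simpa using this

theorem procOf_trans_intro {Ty : B → V → Set V} {e : ℕ → B × V}
    (he : Function.Surjective e) {G : IOGES B V S} {s : S} {b : B} {v w : V}
    (hg : G.guard b v s) (hw : w ∈ Ty b v) :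
    PTrans Ty (procOf e G s) (b, v, w) (procOf e G (G.update b v w s)) := by
  obtain ⟨n, hn⟩ := he (b, v)
  have hb : (e n).1 = b := by rw [hn]
  have hv : (e n).2 = v := by rw [hn]
  subst hb; subst hv
  have hitem : PTrans Ty (PFunctor.M.corec (pFn e G) (PrSt.item n s))
      ((e n).1, (e n).2, w) (procOf e G (G.update (e n).1 (e n).2 w s)) :=
    PTrans.pref hw (dest_item_pos hg)
  rw [procOf_def]
  exact trans_spine hitem n 0 (by omega)

theorem ptrans_typed {Ty : B → V → Set V} {P P' : Proc B V} {a : B × V × V}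
    (h : PTrans Ty P a P') : a.2.2 ∈ Ty a.1 a.2.1 := by
  induction h with
  | pref hw hd => exact hw
  | chl hd hsub ih => exact ih
  | chr hd hsub ih => exact ih

theorem pES_trace_typed {Ty : B → V → Set V} {P P' : Proc B V} {τ : List (B × V × V)}
    (h : (pES Ty).mtrans P τ P') : ∀ a ∈ τ, a.2.2 ∈ Ty a.1 a.2.1 := by
  induction h with
  | nil => intro a ha; simp at ha
  | snoc h1 h2 ih =>
    intro a ha
    rcases List.mem_append.mp ha with h | h
    · exact ih a h
    · rw [List.mem_singleton] at h
      subst h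
      exact ptrans_typed h2

theorem htrans_typed {B V Pl : Type} {Ty : B → V → Set V}
    {o o' : Option (Heap B V Pl)} {a : B × V × V}
    (h : HTrans Ty o a o') : a.2.2 ∈ Ty a.1 a.2.1 := by
  cases h with
  | bio hw => exact hw
  | contradict hne hw hw' => exact hw'
  | chaos hw => exact hw

theorem hES_trace_typed {B V Pl : Type} {Ty : B → V → Set V}
    {o o' : Option (Heap B V Pl)} {τ : List (B × V × V)}
    (h : (hES Ty).mtrans o τ o') : ∀ a ∈ τ, a.2.2 ∈ Ty a.1 a.2.1 := by
  induction h with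
  | nil => intro a ha; simp at ha
  | snoc h1 h2 ih =>
    intro a ha
    rcases List.mem_append.mp ha with h | h
    · exact ih a h
    · rw [List.mem_singleton] at h
      subst h
      exact htrans_typed h2

theorem es_to_proc {Ty : B → V → Set V} {e : ℕ → B × V}
    (he : Function.Surjective e) {G : IOGES B V S} :
    ∀ (τ : List (B × V × V)) (s : S), (∃ s', (G.es Ty).mtrans s τ s') →
      ∃ P', (pES Ty).mtrans (procOf e G s) τ P' := by
  intro τ
  induction τ with
  | nil => exact fun s _ => ⟨_, ES.mtrans.nil _⟩
  | cons a τ ih =>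
    rintro s ⟨s', h⟩
    obtain ⟨s1, ht, hm⟩ := ES.mtrans_cons_inv h a τ rfl
    obtain ⟨b, v, w⟩ := a
    obtain ⟨hg, hw, hup⟩ := ht
    subst hup
    obtain ⟨P', hP'⟩ := ih _ ⟨s', hm⟩
    exact ⟨P', ES.mtrans_cons (procOf_trans_intro he hg hw) hP'⟩

theorem proc_to_es {Ty : B → V → Set V} {e : ℕ → B × V} {G : IOGES B V S} :
    ∀ (τ : List (B × V × V)) (s : S),
      (∃ P', (pES Ty).mtrans (procOf e G s) τ P') →
      ∃ s', (G.es Ty).mtrans s τ s' := by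
  intro τ
  induction τ with
  | nil => exact fun s _ => ⟨s, ES.mtrans.nil s⟩
  | cons a τ ih =>
    rintro s ⟨P', h⟩
    obtain ⟨P1, ht, hm⟩ := ES.mtrans_cons_inv h a τ rfl
    obtain ⟨b, v, w, rfl, hg, hw, rfl⟩ := procOf_trans_inv ht
    obtain ⟨s', hs'⟩ := ih _ ⟨P', hm⟩
    exact ⟨s', ES.mtrans_cons ⟨hg, hw, rfl⟩ hs'⟩

theorem procOf_traces {Ty : B → V → Set V} {e : ℕ → B × V}
    (he : Function.Surjective e) (G : IOGES B V S) (s : S) :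
    (G.es Ty).tracesFrom s = (pES Ty).tracesFrom (procOf e G s) := by
  ext τ
  rw [ES.mem_tracesFrom, ES.mem_tracesFrom]
  exact ⟨es_to_proc he τ s, proc_to_es τ s⟩

end AuxProcOf
section AuxFwd

variable {B V Pl : Type} {Ty : B → V → Set V}

theorem fwd_step {P P' : Proc B V} {a : B × V × V} (hP : PTrans Ty P a P') :
    ∀ (t : Pl) (h1 hf : Heap B V Pl), sat Ty h1 (embA P t) →
      (∃ t' h1' hf', HTrans Ty (some (Heap.single (.token t) + (h1 + hf))) a
          (some (Heap.single (.token t') + (h1' + hf'))) ∧ sat Ty h1' (embA P' t'))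
      ∨ HTrans Ty (some (Heap.single (.token t) + (h1 + hf))) a none := by
  induction hP with
  | @pref P b v w k hw hd =>
    intro t h1 hf hsat
    obtain ⟨t', hsat⟩ := sat_expl hsat (dest_embA_pre hd)
    obtain ⟨z, hsat⟩ := sat_exv hsat dest_emb_ex1
    obtain ⟨ha, hb, hsplit, hsa, hsb⟩ := sat_star hsat dest_emb_star1
    have hsa' : sat Ty ha (PFunctor.M.corec embStep (EmbSt.leafChunk (Chunk.bio b t v z t'))) := by
      simpa using hsa
    have hsb' : sat Ty hb (embA (k z) t') := by simpa [embA] using hsb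
    obtain ⟨hpos, hwt⟩ := sat_chunk hsa' dest_emb_leaf
    have hzt : z ∈ Ty b v := hwt
    obtain ⟨ha', hae⟩ := heap_split_single hpos
    by_cases hzw : w = z
    · subst hzw
      left
      refine ⟨t', hb, ha' + hf, ?_, hsb'⟩
      have hheq : Heap.single (Chunk.token t) + (h1 + hf)
          = Heap.single (Chunk.token t) + Heap.single (Chunk.bio b t v w t')
            + (hb + (ha' + hf)) := by
        rw [hsplit, hae]; abel
      rw [hheq]
      have hheq2 : Heap.single (Chunk.token t') + (hb + (ha' + hf))
          = Heap.single (Chunk.token t') + (hb + (ha' + hf)) := rfl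
      exact HTrans.bio hw
    · right
      have hheq : Heap.single (Chunk.token t) + (h1 + hf)
          = Heap.single (Chunk.token t) + Heap.single (Chunk.bio b t v z t')
            + (hb + (ha' + hf)) := by
        rw [hsplit, hae]; abel
      rw [hheq]
      exact HTrans.contradict (fun h => hzw h.symm) hzt hw
  | @chl P P'' a f hd hsub ih =>
    intro t h1 hf hsat
    obtain ⟨ha, hb, hsplit, hsa, hsb⟩ := sat_star hsat (dest_embA_choice hd)
    have hheq : Heap.single (Chunk.token t) + (h1 + hf)
        = Heap.single (Chunk.token t) + (ha + (hb + hf)) := by rw [hsplit]; abel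
    rw [hheq]
    rcases ih t ha (hb + hf) hsa with ⟨t', h1', hf', hstep, hsat'⟩ | hstep
    · exact Or.inl ⟨t', h1', hf', hstep, hsat'⟩
    · exact Or.inr hstep
  | @chr P P'' a f hd hsub ih =>
    intro t h1 hf hsat
    obtain ⟨ha, hb, hsplit, hsa, hsb⟩ := sat_star hsat (dest_embA_choice hd)
    have hheq : Heap.single (Chunk.token t) + (h1 + hf)
        = Heap.single (Chunk.token t) + (hb + (ha + hf)) := by rw [hsplit]; abel
    rw [hheq]
    rcases ih t hb (ha + hf) hsb with ⟨t', h1', hf', hstep, hsat'⟩ | hstep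
    · exact Or.inl ⟨t', h1', hf', hstep, hsat'⟩
    · exact Or.inr hstep

theorem chaos_run : ∀ τ : List (B × V × V), (∀ a ∈ τ, a.2.2 ∈ Ty a.1 a.2.1) →
    (hES (Pl := Pl) Ty).mtrans none τ none := by
  intro τ
  induction τ with
  | nil => exact fun _ => ES.mtrans.nil none
  | cons a τ ih =>
    intro h
    obtain ⟨b, v, w⟩ := a
    exact ES.mtrans_cons (HTrans.chaos (h _ List.mem_cons_self))
      (ih fun a ha => h a (List.mem_cons_of_mem _ ha))

theorem fwd_multi : ∀ (τ : List (B × V × V)) (P Q : Proc B V),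
    (pES Ty).mtrans P τ Q → ∀ (t : Pl) (h1 hf : Heap B V Pl), sat Ty h1 (embA P t) →
      ∃ o, (hES Ty).mtrans (some (Heap.single (.token t) + (h1 + hf))) τ o := by
  intro τ
  induction τ with
  | nil => exact fun P Q h t h1 hf hs => ⟨_, ES.mtrans.nil _⟩
  | cons a τ ih =>
    intro P Q h t h1 hf hs
    obtain ⟨P1, ht, hm⟩ := ES.mtrans_cons_inv h a τ rfl
    rcases fwd_step ht t h1 hf hs with ⟨t', h1', hf', hstep, hsat'⟩ | hstep
    · obtain ⟨o, ho⟩ := ih P1 Q hm t' h1' hf' hsat'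
      exact ⟨o, ES.mtrans_cons hstep ho⟩
    · exact ⟨none, ES.mtrans_cons hstep (chaos_run τ (pES_trace_typed hm))⟩

theorem sat_procAssn_split {h : Heap B V Pl} {P : Proc B V}
    (hs : sat Ty h (procAssn Pl P)) :
    ∃ t h1 hf, h = Heap.single (Chunk.token t) + (h1 + hf) ∧ sat Ty h1 (embA P t) := by
  obtain ⟨t, hs⟩ := sat_expl hs (dest_assn_expl _)
  obtain ⟨ha, hb, hsplit, hsa, hsb⟩ := sat_star hs (dest_assn_star _ _)
  have hsa' : sat Ty ha (Assn.mkChunk (Chunk.token t)) := by simpa using hsa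
  have hsb' : sat Ty hb (embA P t) := by simpa using hsb
  obtain ⟨hpos, -⟩ := sat_chunk hsa' (dest_assn_chunk _)
  obtain ⟨ha', hae⟩ := heap_split_single hpos
  exact ⟨t, hb, ha', by rw [hsplit, hae]; abel, hsb'⟩

theorem proc_to_heap {P : Proc B V} {τ : List (B × V × V)}
    (h : ∃ Q, (pES Ty).mtrans P τ Q) : τ ∈ tracesHA Ty (procAssn Pl P) := by
  intro hp hsat
  rw [ES.mem_tracesFrom]
  obtain ⟨Q, hQ⟩ := h
  obtain ⟨t, h1, hf, heq, hsat1⟩ := sat_procAssn_split hsat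
  rw [heq]
  exact fwd_multi τ P Q hQ t h1 hf hsat1

end AuxFwd
section AuxBwd

variable {B V : Type} {Ty : B → V → Set V}

theorem rhoWit_spec (pick : B → V → V) {σ τ0 : List (B × V × V)} {b : B} {v w : V}
    {rest : List (B × V × V)} (hσ : σ = τ0 ++ (b, v, w) :: rest) :
    rhoWit pick σ τ0 b v = w := by
  have hdrop : σ.drop τ0.length = (b, v, w) :: rest := by
    rw [hσ]; exact List.drop_left
  have hcond : ∃ w', ∃ rest', τ0 <+: σ ∧ σ.drop τ0.length = (b, v, w') :: rest' :=
    ⟨w, rest, ⟨(b, v, w) :: rest, hσ.symm⟩, hdrop⟩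
  simp only [rhoWit]
  rw [dif_pos hcond]
  obtain ⟨rest', hpre, hdrop'⟩ := hcond.choose_spec
  have hdd := hdrop.symm.trans hdrop'
  have h1 := (List.cons.inj hdd).1
  simp only [Prod.mk.injEq] at h1
  exact h1.2.2.symm

theorem rhoWit_WT (pick : B → V → V) (hpick : ∀ b v, pick b v ∈ Ty b v)
    {σ : List (B × V × V)} (hty : ∀ a ∈ σ, a.2.2 ∈ Ty a.1 a.2.1) :
    schedWT Ty (rhoWit pick σ) := by
  intro τ0 b v
  by_cases hcond : ∃ w, ∃ rest, τ0 <+: σ ∧ σ.drop τ0.length = (b, v, w) :: rest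
  · simp only [rhoWit]
    rw [dif_pos hcond]
    obtain ⟨rest', hpre, hdrop⟩ := hcond.choose_spec
    have hmem : (b, v, hcond.choose) ∈ σ := by
      have h1 : (b, v, hcond.choose) ∈ (b, v, hcond.choose) :: rest' :=
        List.mem_cons_self
      rw [← hdrop] at h1
      exact List.drop_subset _ _ h1
    exact hty _ hmem
  · simp only [rhoWit]
    rw [dif_neg hcond]
    exact hpick b v

theorem extract_token {ρ : List (B × V × V) → B → V → V} {P : Proc B V}
    {τdone : List (B × V × V)} {t t0 t1 : List Bool} {junk fr : Heap B V (List Bool)}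
    {b : B} {v w : V}
    (hjt : ∀ x, junk (Chunk.token x) = 0)
    (hHeq : Heap.single (Chunk.token t) + gmod ρ P τdone t t + junk
      = Heap.single (Chunk.token t0) + Heap.single (Chunk.bio b t0 v w t1) + fr) :
    t0 = t := by
  by_contra hne0
  have hcf := congrFun hHeq (Chunk.token t0)
  simp only [Pi.add_apply] at hcf
  rw [gmod_token, hjt, Heap.single_apply_ne (show Chunk.token t0 ≠ Chunk.token t by simp [hne0]),
    Heap.single_apply_self,
    Heap.single_apply_ne (show Chunk.token t0 ≠ Chunk.bio b t0 v w t1 by simp)] at hcf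
  simp only [add_zero, zero_add] at hcf
  exact (lt_of_lt_of_le zero_lt_one
    (le_self_add : (1 : ℕ∞) ≤ 1 + fr (Chunk.token t0))).ne' hcf.symm

theorem extract_chunk {ρ : List (B × V × V) → B → V → V} {P : Proc B V}
    {τdone : List (B × V × V)} {t t1 : List Bool} {junk fr : Heap B V (List Bool)}
    {b : B} {v w : V}
    (hjs : ∀ b' s1 v' w' t1', 0 < junk (Chunk.bio b' s1 v' w' t1') → ¬ t <+: s1)
    (hHeq : Heap.single (Chunk.token t) + gmod ρ P τdone t t + junk
      = Heap.single (Chunk.token t) + Heap.single (Chunk.bio b t v w t1) + fr) :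
    0 < gmod ρ P τdone t t (Chunk.bio b t v w t1) := by
  have hjc : junk (Chunk.bio b t v w t1) = 0 := by
    by_contra hj0
    exact hjs b t v w t1 (lt_of_le_of_ne zero_le (Ne.symm hj0)) (List.prefix_refl t)
  have hcf := congrFun hHeq (Chunk.bio b t v w t1)
  simp only [Pi.add_apply] at hcf
  rw [hjc, Heap.single_apply_ne (show Chunk.bio b t v w t1 ≠ Chunk.token t by simp),
    Heap.single_apply_self] at hcf
  simp only [zero_add, add_zero] at hcf
  rw [hcf]
  exact lt_of_lt_of_le zero_lt_one le_self_add

theorem bwd (pick : B → V → V) (σ : List (B × V × V)) :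
    ∀ (τrem τdone : List (B × V × V)) (P : Proc B V) (t : List Bool)
      (junk : Heap B V (List Bool)),
      σ = τdone ++ τrem →
      (∀ x, junk (Chunk.token x) = 0) →
      (∀ b s1 v w t1, 0 < junk (Chunk.bio b s1 v w t1) → ¬ t <+: s1) →
      (∃ o, (hES Ty).mtrans
        (some (Heap.single (Chunk.token t) + gmod (rhoWit pick σ) P τdone t t + junk)) τrem o) →
      ∃ P', (pES Ty).mtrans P τrem P' := by
  intro τrem
  induction τrem with
  | nil => exact fun _ P _ _ _ _ _ _ => ⟨P, ES.mtrans.nil P⟩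
  | cons a τ' ih =>
    rintro τdone P t junk hσ hjt hjs ⟨o, ho⟩
    obtain ⟨o1, hstep, hrest⟩ := ES.mtrans_cons_inv ho a τ' rfl
    revert hstep
    generalize hH : some (Heap.single (Chunk.token t)
        + gmod (rhoWit pick σ) P τdone t t + junk) = H0
    intro hstep
    cases hstep with
    | @bio b v w t0 t1 fr hw =>
      have hHeq := Option.some.inj hH
      obtain rfl : t = t0 := (extract_token hjt hHeq).symm
      have hgpos := extract_chunk hjs hHeq
      obtain ⟨pos, hpm⟩ := hSum_apply_pos hgpos
      obtain ⟨b', v', w', s1', hceq, hcase⟩ := pm_shape pos P τdone t t _ hpm.ne'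
      obtain ⟨hb, hs1, hv, hw2, ht1⟩ :
          b = b' ∧ t = s1' ∧ v = v' ∧ w = w' ∧ t1 = t ++ pos ++ [true] := by
        simpa using hceq
      subst hb; subst hv; subst hw2; subst ht1
      rw [← hs1] at hcase
      rcases hcase with ⟨-, hwρ, Q, kk, hsub, hQ⟩ | ⟨q, hq, hqne⟩
      · obtain ⟨dead, hdec, hdt, hds⟩ := gmod_decomp (ρ := rhoWit pick σ) hsub hQ τdone t t
        rw [← hwρ] at hdec
        have hfin : ∀ c, ((Heap.single (Chunk.token t)
            + Heap.single (Chunk.bio b t v w (t ++ pos ++ [true]))) : Heap B V (List Bool)) c ≠ ⊤ := by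
          intro c htop
          rcases WithTop.add_eq_top.mp htop with h | h
          · exact Heap.single_ne_top _ _ h
          · exact Heap.single_ne_top _ _ h
        have hfr : fr = gmod (rhoWit pick σ) (kk w) (τdone ++ [(b, v, w)])
            (t ++ pos ++ [true]) (t ++ pos ++ [true]) + (dead + junk) := by
          apply heap_cancel hfin
          rw [← hHeq, hdec]
          abel
        have hrest' : (hES Ty).mtrans (some (Heap.single (Chunk.token (t ++ pos ++ [true]))
            + gmod (rhoWit pick σ) (kk w) (τdone ++ [(b, v, w)])
                (t ++ pos ++ [true]) (t ++ pos ++ [true])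
            + (dead + junk))) τ' o := by
          rw [hfr] at hrest
          rwa [← add_assoc] at hrest
        have hjt' : ∀ x, (dead + junk) (Chunk.token x) = 0 := fun x => by
          show dead (Chunk.token x) + junk (Chunk.token x) = 0
          rw [hdt, hjt, add_zero]
        have hjs' : ∀ b' s1 v' w' t1', 0 < (dead + junk) (Chunk.bio b' s1 v' w' t1') →
            ¬ (t ++ pos ++ [true]) <+: s1 := by
          intro b' s1 v' w' t1' hp hpre
          rcases enat_pos_add hp with h1 | h2
          · rcases hds b' s1 v' w' t1' h1 with rfl | ⟨q, rfl, hnq⟩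
            · have hlen := hpre.length_le
              simp at hlen
            · apply hnq
              have hpre2 : t ++ (pos ++ [true]) <+: t ++ q := by
                simpa [List.append_assoc] using hpre
              exact (List.prefix_append_right_inj t).mp hpre2
          · refine hjs b' s1 v' w' t1' h2 ?_
            exact List.IsPrefix.trans ⟨pos ++ [true], by simp⟩ hpre
        have hstepP : PTrans Ty P (b, v, w) (kk w) := ptrans_of_subAt hsub hQ hw
        obtain ⟨P'', hP''⟩ := ih (τdone ++ [(b, v, w)]) (kk w) (t ++ pos ++ [true])
          (dead + junk) (by rw [hσ]; simp) hjt' hjs' ⟨o, hrest'⟩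
        exact ⟨P'', ES.mtrans_cons hstepP hP''⟩
      · exfalso
        apply hqne
        simpa using hq
    | @contradict b v w w' t0 t1 fr hne hw hw' =>
      have hHeq := Option.some.inj hH
      obtain rfl : t = t0 := (extract_token hjt hHeq).symm
      have hgpos := extract_chunk hjs hHeq
      obtain ⟨pos, hpm⟩ := hSum_apply_pos hgpos
      obtain ⟨b2, v2, w2, s2, hceq, hcase⟩ := pm_shape pos P τdone t t _ hpm.ne'
      obtain ⟨hb, hs1, hv, hw2, ht1⟩ :
          b = b2 ∧ t = s2 ∧ v = v2 ∧ w = w2 ∧ t1 = t ++ pos ++ [true] := by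
        simpa using hceq
      subst hb; subst hv; subst hw2; subst ht1
      rw [← hs1] at hcase
      rcases hcase with ⟨-, hwρ, Q, kk, hsub, hQ⟩ | ⟨q, hq, hqne⟩
      · exfalso
        have hval : rhoWit pick σ τdone b v = w' := rhoWit_spec pick hσ
        rw [hval] at hwρ
        exact hne hwρ
      · exfalso
        apply hqne
        simpa using hq
    | @chaos b v w hw => cases hH

end AuxBwd
/-- Combined translation correctness: for every I/O-guarded event system `G`
and state `s`, `traces(G, s) = tracesH(emb(proc(G, s)))`, i.e. the event
system, its process translation, and the derived separation-logic I/O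
specification all have exactly the same trace sets. -/
theorem ioges_iospec_trace_equiv {B V S : Type} (Ty : B → V → Set V)
    (hne : ∀ b v, (Ty b v).Nonempty)
    (e : ℕ → B × V) (he : Function.Surjective e) (G : IOGES B V S) (s : S) :
    (G.es Ty).tracesFrom s = (pES Ty).tracesFrom (procOf e G s) ∧
    (G.es Ty).tracesFrom s = tracesHA Ty (procAssn (List Bool) (procOf e G s)) := by
  have hpart1 : (G.es Ty).tracesFrom s = (pES Ty).tracesFrom (procOf e G s) :=
    procOf_traces he G s
  refine ⟨hpart1, ?_⟩
  rw [hpart1]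
  ext τ
  constructor
  · intro hτ
    rw [ES.mem_tracesFrom] at hτ
    exact proc_to_heap hτ
  · intro hτ
    rw [ES.mem_tracesFrom]
    have hpickTy : ∀ b v, (fun b v => (hne b v).choose) b v ∈ Ty b v :=
      fun b v => (hne b v).choose_spec
    have hρ0 : schedWT Ty (fun _ b v => (hne b v).choose) := fun τ0 b v => hpickTy b v
    have hsat0 := sat_canonical hρ0 (procOf e G s)
    have hexec0 := hτ _ hsat0
    rw [ES.mem_tracesFrom] at hexec0
    obtain ⟨o0, ho0⟩ := hexec0
    have hty : ∀ a ∈ τ, a.2.2 ∈ Ty a.1 a.2.1 := hES_trace_typed ho0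
    have hρw : schedWT Ty (rhoWit (fun b v => (hne b v).choose) τ) :=
      rhoWit_WT _ hpickTy hty
    have hsatw := sat_canonical hρw (procOf e G s)
    have hexecw := hτ _ hsatw
    rw [ES.mem_tracesFrom] at hexecw
    obtain ⟨ow, how⟩ := hexecw
    refine bwd (Ty := Ty) (fun b v => (hne b v).choose) τ τ [] (procOf e G s) [] 0 rfl
      (fun x => rfl) (fun _ _ _ _ _ h => absurd h (by simp)) ⟨ow, ?_⟩
    have heq2 : Heap.single (Chunk.token ([] : List Bool))
        + gmod (rhoWit (fun b v => (hne b v).choose) τ) (procOf e G s) [] [] []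
        + (0 : Heap B V (List Bool))
        = Heap.single (Chunk.token [])
          + cmod (rhoWit (fun b v => (hne b v).choose) τ) (procOf e G s) := by
      rw [add_zero]; rfl
    rw [heq2]
    exact how
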